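/- Let π be a set of primes, G a finite group, and F an N^π-Fitting set of G. Then the F-radical G_F equals each of the following: the join of all normal subgroups of G in F; the join of all subnormal subgroups of G in F; the join of all N^π-Dnormal subgroups of G in F; and the join of all N^π-Dsubnormal subgroups of G in F. -/

import Mathlib

/-- A (finite) group is a `π`-group if every prime dividing its order lies in `π`. -/
def IsPiGroup (π : Set ℕ) (G : Type*) [Group G] : Prop :=
  ∀ p : ℕ, p.Prime → p ∣ Nat.card G → p ∈ π

/-- `O^π(G)`: the smallest normal subgroup of `G` whose quotient is a `π`-group
(recall that `N.index = Nat.card (G ⧸ N)`). -/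
def piResidual (π : Set ℕ) (G : Type*) [Group G] : Subgroup G :=
  ⨅ N ∈ {N : Subgroup G | N.Normal ∧ ∀ p : ℕ, p.Prime → p ∣ N.index → p ∈ π}, N

/-- `O_π(G)`: the largest normal `π`-subgroup of `G`. -/
def piCore (π : Set ℕ) (G : Type*) [Group G] : Subgroup G :=
  ⨆ N ∈ {N : Subgroup G | N.Normal ∧ IsPiGroup π N}, N

/-- `O^π(H)` for a subgroup `H ≤ G`, regarded as a subgroup of `G`. -/
def piResidualIn (π : Set ℕ) {G : Type*} [Group G] (H : Subgroup G) : Subgroup G :=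
  (piResidual π H).map H.subtype

/-- `H` is `N^π`-Dnormal in `G`: if `|π| ≤ 1` this means `H` is normal in `G`; if
`|π| ≥ 2` it means that `O^π(H)` is normal in `G` and `O^π(G)` normalizes `H`. -/
def IsDnormal (π : Set ℕ) {G : Type*} [Group G] (H : Subgroup G) : Prop :=
  (π.Subsingleton ∧ H.Normal) ∨
  (¬ π.Subsingleton ∧ (piResidualIn π H).Normal ∧ piResidual π G ≤ Subgroup.normalizer (H : Set G))

/-- `S` is `N^π`-Dsubnormal in `G`: there is a chain `S = S₀ ≤ S₁ ≤ ⋯ ≤ Sₙ = G`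
with each `Sᵢ` being `N^π`-Dnormal in `Sᵢ₊₁`. -/
def IsDsubnormal (π : Set ℕ) {G : Type*} [Group G] (S : Subgroup G) : Prop :=
  ∃ (n : ℕ) (c : Fin (n + 1) → Subgroup G), c 0 = S ∧ c (Fin.last n) = ⊤ ∧
    ∀ i : Fin n, c i.castSucc ≤ c i.succ ∧
      IsDnormal π ((c i.castSucc).subgroupOf (c i.succ))

/-- `H` is subnormal in `G`. -/
def IsSubnormal' {G : Type*} [Group G] (H : Subgroup G) : Prop :=
  ∃ (n : ℕ) (c : Fin (n + 1) → Subgroup G), c 0 = H ∧ c (Fin.last n) = ⊤ ∧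
    ∀ i : Fin n, c i.castSucc ≤ c i.succ ∧
      ((c i.castSucc).subgroupOf (c i.succ)).Normal

/-- The class `N^π`: groups that are the (internal) direct product of a `π`-group and a
nilpotent `π'`-group. -/
def IsNPiGroup (π : Set ℕ) (G : Type*) [Group G] : Prop :=
  ∃ H K : Subgroup G, H.Normal ∧ K.Normal ∧ H ⊓ K = ⊥ ∧ H ⊔ K = ⊤ ∧
    IsPiGroup π H ∧ IsPiGroup πᶜ K ∧ Group.IsNilpotent K

/-- The `N^π`-residual `G^{N^π}`: the smallest normal subgroup of `G` whose quotient
belongs to the class `N^π`. -/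
def nPiResidual (π : Set ℕ) (G : Type*) [Group G] : Subgroup G :=
  ⨅ N ∈ {N : Subgroup G | ∃ h : N.Normal, letI := h; IsNPiGroup π (G ⧸ N)}, N

/-- `G` is `π'`-soluble: it has a normal series each of whose factors is either a
`π`-group or a `p`-group for some prime `p ∉ π`. -/
def IsPiPrimeSoluble (π : Set ℕ) (G : Type*) [Group G] : Prop :=
  ∃ (n : ℕ) (c : Fin (n + 1) → Subgroup G), c 0 = ⊥ ∧ c (Fin.last n) = ⊤ ∧
    ∀ i : Fin n, c i.castSucc ≤ c i.succ ∧
      ((c i.castSucc).subgroupOf (c i.succ)).Normal ∧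
      ((∀ p : ℕ, p.Prime → p ∣ ((c i.castSucc).subgroupOf (c i.succ)).index → p ∈ π) ∨
        ∃ p : ℕ, p.Prime ∧ p ∉ π ∧
          ∃ k : ℕ, ((c i.castSucc).subgroupOf (c i.succ)).index = p ^ k)

/-- An `N^π`-Fitting set of `G`. -/
def IsNPiFittingSet (π : Set ℕ) {G : Type*} [Group G] (F : Set (Subgroup G)) : Prop :=
  F.Nonempty ∧
  (∀ S ∈ F, ∀ T : Subgroup G, T ≤ S → IsDsubnormal π (T.subgroupOf S) → T ∈ F) ∧
  (∀ S ∈ F, ∀ T ∈ F, IsDnormal π (S.subgroupOf (S ⊔ T)) →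
    IsDnormal π (T.subgroupOf (S ⊔ T)) → S ⊔ T ∈ F) ∧
  (∀ S ∈ F, ∀ x : G, S.map (MulAut.conj x).toMonoidHom ∈ F)

/-- The `F`-radical `H_F` of a subgroup `H` of `G`: the join of all subgroups of `H`
belonging to `F` that are normal in `H`. -/
def fittingRadical {G : Type*} [Group G] (F : Set (Subgroup G)) (H : Subgroup G) : Subgroup G :=
  ⨆ S ∈ {S : Subgroup G | S ∈ F ∧ S ≤ H ∧ (S.subgroupOf H).Normal}, S

/-- `M` is an `F`-maximal subgroup of `K`. -/
def IsFMaximalIn {G : Type*} [Group G] (F : Set (Subgroup G)) (M K : Subgroup G) : Prop :=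
  M ∈ F ∧ M ≤ K ∧ ∀ S ∈ F, S ≤ K → M ≤ S → S = M

/-- `V` is an `F`-injector of `G`. -/
def IsInjector {G : Type*} [Group G] (F : Set (Subgroup G)) (V : Subgroup G) : Prop :=
  ∀ K : Subgroup G, IsSubnormal' K → IsFMaximalIn F (V ⊓ K) K

/-- `V` is an `F`-injector of the subgroup `N` of `G`. -/
def IsInjectorIn {G : Type*} [Group G] (F : Set (Subgroup G)) (V N : Subgroup G) : Prop :=
  V ≤ N ∧ ∀ K : Subgroup G, K ≤ N → IsSubnormal' (K.subgroupOf N) → IsFMaximalIn F (V ⊓ K) K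

/-- `M` is an `N^π`-maximal subgroup of `X`. -/
def IsNPiMaximal (π : Set ℕ) {X : Type*} [Group X] (M : Subgroup X) : Prop :=
  IsNPiGroup π M ∧ ∀ M' : Subgroup X, IsNPiGroup π M' → M ≤ M' → M' = M

/-- `U` is an `N^π`-projector of `G`: `UK/K` is `N^π`-maximal in `G/K` for every
normal subgroup `K` of `G`. -/
def IsNPiProjector (π : Set ℕ) {G : Type*} [Group G] (U : Subgroup G) : Prop :=
  ∀ K : Subgroup G, ∀ hK : K.Normal,
    letI := hK
    IsNPiMaximal π ((U ⊔ K).map (QuotientGroup.mk' K))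

/-- An `N^π`-Fitting class of (finite) groups: a non-empty isomorphism-closed class
closed under `N^π`-Dnormal subgroups and under joins of pairs of `N^π`-Dnormal
subgroups. -/
def IsNPiFittingClass (π : Set ℕ) (F : (H : Type) → [_inst : Group H] → Prop) : Prop :=
  (∃ (H : Type) (g : Group H) (_ : Finite H), F H (_inst := g)) ∧
  (∀ (H K : Type) [Group H] [Group K] [Finite H] [Finite K],
    F H → Nonempty (H ≃* K) → F K) ∧
  (∀ (H : Type) [Group H] [Finite H] (N : Subgroup H),
    F H → IsDnormal π N → F ↥N) ∧
  (∀ (H : Type) [Group H] [Finite H] (M N : Subgroup H),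
    F ↥M → F ↥N → IsDnormal π M → IsDnormal π N → M ⊔ N = ⊤ → F H)

set_option linter.unusedSectionVars false
set_option linter.unusedVariables false


section Aux
variable {G : Type*} [Group G]

/-- conjugate of a subgroup -/
def cjj (x : G) (S : Subgroup G) : Subgroup G := S.map (MulAut.conj x).toMonoidHom

lemma mem_cjj {x z : G} {S : Subgroup G} : z ∈ cjj x S ↔ x⁻¹ * z * x ∈ S := by
  constructor
  · rintro ⟨s, hs, rfl⟩
    have h2 : x⁻¹ * (MulAut.conj x).toMonoidHom s * x = s := by
      simp [MulAut.conj_apply]; group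
    rwa [h2]
  · intro h
    refine ⟨x⁻¹ * z * x, h, ?_⟩
    simp [MulAut.conj_apply]; group

lemma cjj_cjj (b a : G) (S : Subgroup G) : cjj b (cjj a S) = cjj (b * a) S := by
  ext z
  simp only [mem_cjj, mul_inv_rev]
  constructor <;> intro h <;> [skip; skip] <;>
  · have e : a⁻¹ * (b⁻¹ * z * b) * a = a⁻¹ * b⁻¹ * z * (b * a) := by group
    first
      | (rwa [e] at h) | (rwa [e])

lemma cjj_mono {a : G} {S T : Subgroup G} (h : S ≤ T) : cjj a S ≤ cjj a T := by
  intro z hz; rw [mem_cjj] at *; exact h hz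

lemma cjj_one (S : Subgroup G) : cjj 1 S = S := by ext z; simp [mem_cjj]

lemma cjj_inf (a : G) (S T : Subgroup G) : cjj a (S ⊓ T) = cjj a S ⊓ cjj a T := by
  ext z; simp [mem_cjj, Subgroup.mem_inf]

lemma cjj_sup (a : G) (S T : Subgroup G) : cjj a (S ⊔ T) = cjj a S ⊔ cjj a T :=
  Subgroup.map_sup _ _ _

lemma cjj_bot (a : G) : cjj a (⊥ : Subgroup G) = ⊥ := by
  ext z
  simp only [mem_cjj, Subgroup.mem_bot]
  constructor
  · intro h
    have := congrArg (fun w => a * w * a⁻¹) h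
    simpa [mul_assoc] using this
  · intro h; simp [h]

lemma cjj_eq_of_inv {a : G} {S T : Subgroup G} (h : cjj a S = T) : cjj a⁻¹ T = S := by
  rw [← h, cjj_cjj]; simp [cjj_one]

lemma cjj_self {h : G} {H : Subgroup G} (hh : h ∈ H) : cjj h H = H := by
  ext z; rw [mem_cjj]
  constructor
  · intro hz
    have h3 := H.mul_mem (H.mul_mem hh hz) (H.inv_mem hh)
    have e : h * (h⁻¹ * z * h) * h⁻¹ = z := by group
    rwa [e] at h3
  · intro hz
    exact H.mul_mem (H.mul_mem (H.inv_mem hh) hz) hh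

lemma normal_cjj {N : Subgroup G} (hN : N.Normal) (a : G) : cjj a N = N := by
  ext z; rw [mem_cjj]
  constructor
  · intro hz
    have h3 := hN.conj_mem _ hz a
    have e : a * (a⁻¹ * z * a) * a⁻¹ = z := by group
    rwa [e] at h3
  · intro hz
    have h3 := hN.conj_mem _ hz a⁻¹
    have e : a⁻¹ * z * a⁻¹⁻¹ = a⁻¹ * z * a := by group
    rwa [e] at h3

/-- conj-stability of `S` under all elements of `H` -/
def CFix (S H : Subgroup G) : Prop := ∀ h ∈ H, cjj h S = S

lemma CFix.mono {S H K : Subgroup G} (h : CFix S H) (hKH : K ≤ H) : CFix S K :=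
  fun k hk => h k (hKH hk)

lemma cFix_of_normal {S : Subgroup G} (hS : S.Normal) (H : Subgroup G) : CFix S H :=
  fun a _ => normal_cjj hS a

lemma normal_of_cFix_top {S : Subgroup G} (h : CFix S ⊤) : S.Normal := by
  constructor
  intro n hn g
  have hg := h g trivial
  rw [← hg, mem_cjj]
  have e : g⁻¹ * (g * n * g⁻¹) * g = n := by group
  rwa [e]

lemma normal_subgroupOf_of_cFix {S H : Subgroup G} (hSH : S ≤ H) (h : CFix S H) :
    (S.subgroupOf H).Normal := by
  constructor
  rintro n hn g
  have hg := h (g : G) g.2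
  simp only [Subgroup.mem_subgroupOf] at *
  rw [← hg, mem_cjj]
  push_cast
  have e : (g:G)⁻¹ * ((g:G) * n * (g:G)⁻¹) * g = n := by group
  rwa [e]

lemma cFix_of_normal_subgroupOf {S H : Subgroup G} (hSH : S ≤ H) (h : (S.subgroupOf H).Normal) :
    CFix S H := by
  have key : ∀ b ∈ H, ∀ w ∈ S, b⁻¹ * w * b ∈ S := by
    intro b hb w hw
    have h3 := h.conj_mem ⟨w, hSH hw⟩ (by simpa [Subgroup.mem_subgroupOf]) ⟨b⁻¹, H.inv_mem hb⟩
    rw [Subgroup.mem_subgroupOf] at h3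
    have e : ((⟨b⁻¹, H.inv_mem hb⟩ * ⟨w, hSH hw⟩ * (⟨b⁻¹, H.inv_mem hb⟩)⁻¹ : ↥H) : G)
        = b⁻¹ * w * b := by
      push_cast
      rw [inv_inv]
    rwa [e] at h3
  intro a ha
  ext z
  rw [mem_cjj]
  constructor
  · intro hz
    have h3 := key a⁻¹ (H.inv_mem ha) _ hz
    have e : a⁻¹⁻¹ * (a⁻¹ * z * a) * a⁻¹ = z := by group
    rwa [e] at h3
  · intro hz
    exact key a ha z hz

lemma mem_map_subtype {K : Subgroup G} {Y : Subgroup ↥K} {z : G} :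
    z ∈ Y.map K.subtype ↔ ∃ h : z ∈ K, (⟨z, h⟩ : ↥K) ∈ Y := by
  constructor
  · rintro ⟨y, hy, rfl⟩
    exact ⟨y.2, by simpa using hy⟩
  · rintro ⟨h, hy⟩
    exact ⟨⟨z, h⟩, hy, rfl⟩

lemma cFix_map_subtype_of_normal {K : Subgroup G} {Y : Subgroup ↥K} (hY : Y.Normal) :
    CFix (Y.map K.subtype) K := by
  intro k hk
  ext z
  rw [mem_cjj, mem_map_subtype, mem_map_subtype]
  constructor
  · rintro ⟨hzK, hz⟩
    have hzK2 : z ∈ K := by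
      have h4 := K.mul_mem (K.mul_mem hk hzK) (K.inv_mem hk)
      have e : k * (k⁻¹ * z * k) * k⁻¹ = z := by group
      rwa [e] at h4
    refine ⟨hzK2, ?_⟩
    have h5 := hY.conj_mem _ hz (⟨k, hk⟩ : ↥K)
    convert h5 using 1
    ext
    push_cast
    group
  · rintro ⟨hzK, hz⟩
    have hmem : k⁻¹ * z * k ∈ K := K.mul_mem (K.mul_mem (K.inv_mem hk) hzK) hk
    refine ⟨hmem, ?_⟩
    have h5 := hY.conj_mem _ hz ((⟨k, hk⟩ : ↥K))⁻¹
    convert h5 using 1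
    ext
    push_cast
    group

lemma normal_of_cFix_map_subtype {K : Subgroup G} {Y : Subgroup ↥K}
    (h : CFix (Y.map K.subtype) K) : Y.Normal := by
  constructor
  intro n hn g
  have hg := h (g : G) g.2
  have h2 : ((g * n * g⁻¹ : ↥K) : G) ∈ Y.map K.subtype := by
    rw [← hg, mem_cjj]
    push_cast
    have e : (g:G)⁻¹ * ((g:G) * n * (g:G)⁻¹) * g = n := by group
    rw [e]
    exact ⟨n, hn, rfl⟩
  rw [mem_map_subtype] at h2
  rcases h2 with ⟨hK, hY⟩
  have : (⟨((g * n * g⁻¹ : ↥K) : G), hK⟩ : ↥K) = g * n * g⁻¹ := by ext; rfl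
  rwa [this] at hY

end Aux

def PiNum (π : Set ℕ) (n : ℕ) : Prop := ∀ p : ℕ, p.Prime → p ∣ n → p ∈ π

lemma PiNum.of_dvd {π : Set ℕ} {m n : ℕ} (h : m ∣ n) (hn : PiNum π n) : PiNum π m :=
  fun p pp hp => hn p pp (hp.trans h)

lemma PiNum.mul {π : Set ℕ} {m n : ℕ} (hm : PiNum π m) (hn : PiNum π n) : PiNum π (m * n) := by
  intro p pp hp
  rcases (Nat.Prime.dvd_mul pp).1 hp with h | h
  · exact hm p pp h
  · exact hn p pp h

section PR
variable (π : Set ℕ)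

lemma mem_piResidual {G : Type*} [Group G] {x : G} :
    x ∈ piResidual π G ↔ ∀ N : Subgroup G, N.Normal → PiNum π N.index → x ∈ N := by
  simp [piResidual, Subgroup.mem_iInf, Set.mem_setOf_eq, PiNum]

lemma idx_map_equiv {A B : Type*} [Group A] [Group B] (e : A ≃* B) (N : Subgroup A) :
    (N.map e.toMonoidHom).index = N.index := by
  rw [MulEquiv.toMonoidHom_eq_coe, Subgroup.map_equiv_eq_comap_symm]
  exact Subgroup.index_comap_of_surjective _ e.symm.surjective

lemma normal_map_equiv {A B : Type*} [Group A] [Group B] (e : A ≃* B) {N : Subgroup A}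
    (hN : N.Normal) : (N.map e.toMonoidHom).Normal := by
  rw [MulEquiv.toMonoidHom_eq_coe, Subgroup.map_equiv_eq_comap_symm]
  exact hN.comap _

lemma piRes_equiv {A B : Type*} [Group A] [Group B] (e : A ≃* B) :
    piResidual π B = (piResidual π A).map e.toMonoidHom := by
  ext z
  constructor
  · intro hz
    rw [Subgroup.mem_map_equiv]
    rw [mem_piResidual] at hz ⊢
    intro N hN hidx
    have h1 := hz (N.map e.toMonoidHom) (normal_map_equiv e hN)
      (by rw [idx_map_equiv]; exact hidx)
    rw [Subgroup.mem_map_equiv] at h1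
    exact h1
  · intro hz
    rw [Subgroup.mem_map] at hz
    obtain ⟨y, hy, rfl⟩ := hz
    rw [mem_piResidual] at hy
    rw [mem_piResidual]
    intro N hN hidx
    have h1 := hy (N.comap e.toMonoidHom) (hN.comap _)
      (by rw [Subgroup.index_comap_of_surjective _ e.surjective]; exact hidx)
    exact h1
end PR

section PR2
variable (π : Set ℕ) {G : Type*} [Group G]

lemma prIn_le (H : Subgroup G) : piResidualIn π H ≤ H :=
  Subgroup.map_subtype_le _

lemma pr_map_equiv (f : G ≃* G) (H : Subgroup G) :
    piResidualIn π (H.map f.toMonoidHom) = (piResidualIn π H).map f.toMonoidHom := by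
  set e : ↥H ≃* ↥(H.map f.toMonoidHom) := f.subgroupMap H with he
  have h1 : piResidual π ↥(H.map f.toMonoidHom) = (piResidual π ↥H).map e.toMonoidHom := by
    have := piRes_equiv π e
    convert this using 2 <;> simp [MulEquiv.toMonoidHom_eq_coe]
  have h2 : (H.map f.toMonoidHom).subtype.comp e.toMonoidHom
      = f.toMonoidHom.comp H.subtype := by
    ext x
    rw [he]
    simp [MulEquiv.toMonoidHom_eq_coe, MulEquiv.coe_subgroupMap_apply]
    rfl
  unfold piResidualIn
  rw [h1, Subgroup.map_map, h2, ← Subgroup.map_map]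

lemma pr_cjj (x : G) (H : Subgroup G) :
    piResidualIn π (cjj x H) = cjj x (piResidualIn π H) :=
  pr_map_equiv π (MulAut.conj x) H

end PR2

section PR3
variable (π : Set ℕ) {G : Type*} [Group G]

lemma pr_cfix (H : Subgroup G) : CFix (piResidualIn π H) H := by
  intro h hh
  have := pr_cjj π h H
  rw [cjj_self hh] at this
  exact this.symm

lemma piResidual_normal : (piResidual π G).Normal := by
  constructor
  intro n hn g
  rw [mem_piResidual] at hn ⊢
  intro N hN hidx
  exact hN.conj_mem n (hn N hN hidx) g

variable [Finite G]

lemma piResidual_spec : (piResidual π G).Normal ∧ PiNum π (piResidual π G).index := by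
  classical
  set s : Set (Subgroup G) := {N | N.Normal ∧ PiNum π N.index} with hs
  have htop : (⊤ : Subgroup G) ∈ s := by
    refine ⟨inferInstance, ?_⟩
    rw [Subgroup.index_top]
    intro p pp hp
    exact absurd (Nat.dvd_one.1 hp) pp.ne_one
  obtain ⟨m, hm, hmin⟩ : ∃ m ∈ s, ∀ N ∈ s, id N ≤ id m → id m = id N := by
    obtain ⟨m, hm, hmin⟩ := Set.Finite.exists_minimalFor id s (Set.toFinite s) ⟨⊤, htop⟩
    exact ⟨m, hm, fun N hN h => le_antisymm (hmin hN h) h⟩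
  have hmle : ∀ N ∈ s, m ≤ N := by
    intro N hN
    have hmem : m ⊓ N ∈ s := by
      constructor
      · constructor
        intro x hx g
        exact ⟨hm.1.conj_mem x hx.1 g, hN.1.conj_mem x hx.2 g⟩
      · intro p pp hp
        have h1 : (m ⊓ N).relIndex N * N.index = (m ⊓ N).index :=
          Subgroup.relIndex_mul_index inf_le_right
        rw [← h1] at hp
        rcases (Nat.Prime.dvd_mul pp).1 hp with h | h
        · rw [Subgroup.inf_relIndex_right] at h
          haveI := hm.1
          exact hm.2 p pp (h.trans (Subgroup.relIndex_dvd_index_of_normal m N))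
        · exact hN.2 p pp h
    have := hmin (m ⊓ N) hmem inf_le_left
    simp only [id] at this
    rw [this]
    exact inf_le_right
  have heq : piResidual π G = m := by
    apply le_antisymm
    · exact iInf₂_le m ⟨hm.1, hm.2⟩
    · exact le_iInf₂ fun N hN => hmle N ⟨hN.1, hN.2⟩
  rw [heq]
  exact hm

lemma relindex_map_subtype (K : Subgroup G) (X : Subgroup ↥K) :
    (X.map K.subtype).relIndex K = X.index := by
  have : (X.map K.subtype).subgroupOf K = X :=
    Subgroup.comap_map_eq_self_of_injective K.subtype_injective X
  rw [Subgroup.relIndex, this]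

lemma piNum_relindex_prIn (H : Subgroup G) : PiNum π ((piResidualIn π H).relIndex H) := by
  rw [piResidualIn, relindex_map_subtype]
  exact (piResidual_spec π).2

lemma piResidual_le_of {H N : Subgroup G} (hNH : N ≤ H) (hCF : CFix N H)
    (hidx : PiNum π (N.relIndex H)) : piResidualIn π H ≤ N := by
  have hX : (N.subgroupOf H).Normal := normal_subgroupOf_of_cFix hNH hCF
  have h1 : piResidual π ↥H ≤ N.subgroupOf H := iInf₂_le _ ⟨hX, hidx⟩
  calc piResidualIn π H ≤ (N.subgroupOf H).map H.subtype := Subgroup.map_mono h1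
    _ = N ⊓ H := Subgroup.subgroupOf_map_subtype N H
    _ ≤ N := inf_le_left

lemma relindex_dvd_of_cFix {D A K : Subgroup G} (hDK : D ≤ K) (hCF : CFix D K) (hAK : A ≤ K) :
    D.relIndex A ∣ D.relIndex K := by
  haveI : ((D.subgroupOf K)).Normal := normal_subgroupOf_of_cFix hDK hCF
  have h1 : (D.subgroupOf K).relIndex (A.subgroupOf K) ∣ (D.subgroupOf K).index :=
    Subgroup.relIndex_dvd_index_of_normal _ _
  rwa [Subgroup.relIndex_subgroupOf hAK] at h1

lemma pr_mono {H K : Subgroup G} (hHK : H ≤ K) : piResidualIn π H ≤ piResidualIn π K := by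
  have h1 : piResidualIn π H ≤ piResidualIn π K ⊓ H := by
    apply piResidual_le_of π inf_le_right
    · intro h hh
      rw [cjj_inf, cjj_self hh, pr_cfix π K h (hHK hh)]
    · rw [Subgroup.inf_relIndex_right]
      exact PiNum.of_dvd (relindex_dvd_of_cFix (prIn_le π K) (pr_cfix π K) hHK)
        (piNum_relindex_prIn π K)
  exact h1.trans inf_le_left

lemma pr_sandwich {A T : Subgroup G} (hAT : A ≤ T) (hCF : CFix A T)
    (hq : PiNum π (A.relIndex T)) : piResidualIn π T = piResidualIn π A := by
  apply le_antisymm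
  · apply piResidual_le_of π ((prIn_le π A).trans hAT)
    · intro t ht
      rw [← pr_cjj, hCF t ht]
    · rw [← Subgroup.relIndex_mul_relIndex (piResidualIn π A) A T (prIn_le π A) hAT]
      exact PiNum.mul (piNum_relindex_prIn π A) hq
  · exact pr_mono π hAT

lemma pr_top : piResidualIn π (⊤ : Subgroup G) = piResidual π G := by
  have h1 : piResidual π G = (piResidual π ↥(⊤ : Subgroup G)).map
      (Subgroup.topEquiv (G := G)).toMonoidHom := piRes_equiv π _
  have h2 : (Subgroup.topEquiv (G := G)).toMonoidHom = (⊤ : Subgroup G).subtype := by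
    ext x; rfl
  rw [piResidualIn, ← h2, ← h1]

lemma pr_subgroupOf {S K : Subgroup G} (hSK : S ≤ K) :
    (piResidualIn π (S.subgroupOf K)).map K.subtype = piResidualIn π S := by
  set e : ↥(S.subgroupOf K) ≃* ↥S := Subgroup.subgroupOfEquivOfLe hSK with he
  have h1 : piResidual π ↥S = (piResidual π ↥(S.subgroupOf K)).map e.toMonoidHom :=
    piRes_equiv π e
  have h2 : K.subtype.comp (S.subgroupOf K).subtype = S.subtype.comp e.toMonoidHom := by
    ext x
    rw [he]
    rfl
  rw [piResidualIn, Subgroup.map_map, h2, ← Subgroup.map_map, ← h1, piResidualIn]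

end PR3

section ADS
variable (π : Set ℕ) {G : Type*} [Group G] [Finite G]

/-- ambient form of Dnormality of `S` in `H` -/
def ADn (S H : Subgroup G) : Prop :=
  S ≤ H ∧ ((π.Subsingleton ∧ CFix S H) ∨
    (¬ π.Subsingleton ∧ CFix (piResidualIn π S) H ∧ CFix S (piResidualIn π H)))

variable {π}

lemma ADn_of_cFix {S H : Subgroup G} (hle : S ≤ H) (h : CFix S H) : ADn π S H := by
  refine ⟨hle, ?_⟩
  by_cases hs : π.Subsingleton
  · exact Or.inl ⟨hs, h⟩
  · refine Or.inr ⟨hs, ?_, ?_⟩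
    · intro a ha
      rw [← pr_cjj, h a ha]
    · intro x hx
      exact h x (prIn_le π H hx)

lemma ADn.mono {S K H : Subgroup G} (h : ADn π S H) (hSK : S ≤ K) (hKH : K ≤ H) :
    ADn π S K := by
  obtain ⟨_, h2⟩ := h
  refine ⟨hSK, ?_⟩
  rcases h2 with ⟨hs, hcf⟩ | ⟨hs, h1, h2⟩
  · exact Or.inl ⟨hs, hcf.mono hKH⟩
  · exact Or.inr ⟨hs, h1.mono hKH, h2.mono (pr_mono π hKH)⟩

lemma cFix_prIn_of_norm {S K : Subgroup G} (hSK : S ≤ K)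
    (h : piResidual π ↥K ≤ Subgroup.normalizer ((S.subgroupOf K : Subgroup ↥K) : Set ↥K)) : CFix S (piResidualIn π K) := by
  intro x hx
  rw [piResidualIn, Subgroup.mem_map] at hx
  obtain ⟨y, hy, rfl⟩ := hx
  have hynorm := Subgroup.mem_normalizer_iff.1 (h hy)
  ext z
  rw [mem_cjj]
  constructor
  · intro hz
    have memK : ((K.subtype y)⁻¹ * z * K.subtype y) ∈ K := hSK hz
    have h1 := (hynorm ⟨_, memK⟩).1 (by rwa [Subgroup.mem_subgroupOf])
    rw [Subgroup.mem_subgroupOf] at h1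
    have e : ((y * ⟨_, memK⟩ * y⁻¹ : ↥K) : G) = z := by
      push_cast
      simp only [Subgroup.coe_subtype]
      group
    rwa [e] at h1
  · intro hz
    have hy' : y⁻¹ ∈ piResidual π ↥K := (piResidual π ↥K).inv_mem hy
    have hynorm' := Subgroup.mem_normalizer_iff.1 (h hy')
    have h1 := (hynorm' ⟨z, hSK hz⟩).1 (by rwa [Subgroup.mem_subgroupOf])
    rw [Subgroup.mem_subgroupOf] at h1
    have e : ((y⁻¹ * ⟨z, hSK hz⟩ * y⁻¹⁻¹ : ↥K) : G) = (K.subtype y)⁻¹ * z * K.subtype y := by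
      push_cast
      simp only [Subgroup.coe_subtype]
      group
    rwa [e] at h1

lemma norm_of_cFix_prIn {S K : Subgroup G} (hSK : S ≤ K)
    (h : CFix S (piResidualIn π K)) : piResidual π ↥K ≤ Subgroup.normalizer ((S.subgroupOf K : Subgroup ↥K) : Set ↥K) := by
  intro y hy
  have hcj : cjj (y : G) S = S := h _ (Subgroup.mem_map_of_mem _ hy)
  rw [Subgroup.mem_normalizer_iff]
  intro h'
  constructor
  · intro hh'
    rw [Subgroup.mem_subgroupOf] at hh' ⊢
    rw [← hcj, mem_cjj]
    push_cast
    have e : (y:G)⁻¹ * ((y:G) * h' * (y:G)⁻¹) * y = h' := by group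
    rwa [e]
  · intro hh'
    rw [Subgroup.mem_subgroupOf] at hh' ⊢
    rw [← hcj, mem_cjj] at hh'
    push_cast at hh'
    have e : (y:G)⁻¹ * ((y:G) * (h':G) * (y:G)⁻¹) * y = h' := by group
    rwa [e] at hh'

lemma ADn_of_isDnormal {S K : Subgroup G} (hSK : S ≤ K) (h : IsDnormal π (S.subgroupOf K)) :
    ADn π S K := by
  refine ⟨hSK, ?_⟩
  rcases h with ⟨hsub, hnorm⟩ | ⟨hns, hnorm, hnle⟩
  · exact Or.inl ⟨hsub, cFix_of_normal_subgroupOf hSK hnorm⟩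
  · refine Or.inr ⟨hns, ?_, cFix_prIn_of_norm hSK hnle⟩
    have h1 := cFix_map_subtype_of_normal hnorm
    rwa [pr_subgroupOf π hSK] at h1

lemma isDnormal_of_ADn {S K : Subgroup G} (h : ADn π S K) : IsDnormal π (S.subgroupOf K) := by
  obtain ⟨hSK, h2⟩ := h
  rcases h2 with ⟨hsub, hcf⟩ | ⟨hns, h1, h2⟩
  · exact Or.inl ⟨hsub, normal_subgroupOf_of_cFix hSK hcf⟩
  · refine Or.inr ⟨hns, ?_, norm_of_cFix_prIn hSK h2⟩
    apply normal_of_cFix_map_subtype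
    rwa [pr_subgroupOf π hSK]

lemma isDnormal_of_normal {H : Type*} [Group H] [Finite H] {N : Subgroup H} (hN : N.Normal) :
    IsDnormal π N := by
  by_cases hsub : π.Subsingleton
  · exact Or.inl ⟨hsub, hN⟩
  · refine Or.inr ⟨hsub, ?_, ?_⟩
    · apply normal_of_cFix_top
      intro a _
      rw [← pr_cjj, normal_cjj hN]
    · rw [Subgroup.normalizer_eq_top_iff.2 hN]
      exact le_top

lemma ADn_top_of_isDnormal {S : Subgroup G} (h : IsDnormal π S) : ADn π S ⊤ := by
  refine ⟨le_top, ?_⟩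
  rcases h with ⟨hsub, hnorm⟩ | ⟨hns, h1, h2⟩
  · exact Or.inl ⟨hsub, cFix_of_normal hnorm ⊤⟩
  · refine Or.inr ⟨hns, ?_, ?_⟩
    · intro a _
      exact normal_cjj h1 a
    · intro x hx
      rw [pr_top] at hx
      have hxn := Subgroup.mem_normalizer_iff.1 (h2 hx)
      ext z
      rw [mem_cjj]
      constructor
      · intro hz
        have h3 := (hxn _).1 hz
        have e : x * (x⁻¹ * z * x) * x⁻¹ = z := by group
        rwa [e] at h3
      · intro hz
        have hx' : x⁻¹ ∈ Subgroup.normalizer (S : Set G) := (Subgroup.normalizer (S : Set G)).inv_mem (h2 hx)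
        have h3 := (Subgroup.mem_normalizer_iff.1 hx' z).1 hz
        have e : x⁻¹ * z * x⁻¹⁻¹ = x⁻¹ * z * x := by group
        rwa [e] at h3

lemma isDsubnormal_of_normal {H : Type*} [Group H] [Finite H] {N : Subgroup H}
    (hN : N.Normal) : IsDsubnormal π N := by
  refine ⟨1, ![N, ⊤], rfl, rfl, ?_⟩
  intro i
  fin_cases i
  refine ⟨?_, ?_⟩
  · show N ≤ ⊤
    exact le_top
  · show IsDnormal π (N.subgroupOf ⊤)
    exact isDnormal_of_normal (hN.subgroupOf ⊤)

end ADS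

section FM
variable {π : Set ℕ} {G : Type*} [Group G] [Finite G] {F : Set (Subgroup G)}

/-- the radical of `H` relative to `F` -/
def Rd (F : Set (Subgroup G)) (H : Subgroup G) : Subgroup G :=
  ⨆ S ∈ {S : Subgroup G | S ∈ F ∧ S ≤ H ∧ CFix S H}, S

lemma mem_F_of_cFix (hF : IsNPiFittingSet π F) {W T : Subgroup G} (hW : W ∈ F)
    (hTW : T ≤ W) (hCF : CFix T W) : T ∈ F :=
  hF.2.1 W hW T hTW (isDsubnormal_of_normal (normal_subgroupOf_of_cFix hTW hCF))

lemma bot_mem_F (hF : IsNPiFittingSet π F) : (⊥ : Subgroup G) ∈ F := by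
  obtain ⟨S₀, hS₀⟩ := hF.1
  exact mem_F_of_cFix hF hS₀ bot_le (fun a _ => cjj_bot a)

lemma cjj_mem_F (hF : IsNPiFittingSet π F) {S : Subgroup G} (hS : S ∈ F) (x : G) :
    cjj x S ∈ F := hF.2.2.2 S hS x

lemma join_mem_F (hF : IsNPiFittingSet π F) {S T : Subgroup G} (hS : S ∈ F) (hT : T ∈ F)
    (h1 : ADn π S (S ⊔ T)) (h2 : ADn π T (S ⊔ T)) : S ⊔ T ∈ F :=
  hF.2.2.1 S hS T hT (isDnormal_of_ADn h1) (isDnormal_of_ADn h2)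

lemma le_Rd {H S : Subgroup G} (hS : S ∈ F) (hle : S ≤ H) (hcf : CFix S H) : S ≤ Rd F H :=
  le_iSup_of_le S (le_iSup_of_le ⟨hS, hle, hcf⟩ le_rfl)

lemma cFix_cjj {S H : Subgroup G} (h : CFix S H) (x : G) : CFix (cjj x S) (cjj x H) := by
  intro h' hh'
  rw [mem_cjj] at hh'
  have e : h' * x = x * (x⁻¹ * h' * x) := by group
  rw [cjj_cjj, e, ← cjj_cjj, h _ hh']

lemma Rd_cjj (hF : IsNPiFittingSet π F) (x : G) (H : Subgroup G) :
    cjj x (Rd F H) = Rd F (cjj x H) := by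
  have key : ∀ (y : G) (K : Subgroup G), cjj y (Rd F K) ≤ Rd F (cjj y K) := by
    intro y K
    have h1 : Rd F K ≤ cjj y⁻¹ (Rd F (cjj y K)) := by
      refine iSup₂_le ?_
      rintro S ⟨hSF, hSK, hScf⟩
      have h2 : cjj y S ≤ Rd F (cjj y K) :=
        le_Rd (cjj_mem_F hF hSF y) (cjj_mono hSK) (cFix_cjj hScf y)
      have h3 := cjj_mono (a := y⁻¹) h2
      rwa [cjj_cjj, inv_mul_cancel, cjj_one] at h3
    have h4 := cjj_mono (a := y) h1
    rwa [cjj_cjj, mul_inv_cancel, cjj_one] at h4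
  apply le_antisymm (key x H)
  have h5 := key x⁻¹ (cjj x H)
  rw [cjj_cjj, inv_mul_cancel, cjj_one] at h5
  have h6 := cjj_mono (a := x) h5
  rwa [cjj_cjj, mul_inv_cancel, cjj_one] at h6

lemma Rd_spec (hF : IsNPiFittingSet π F) (H : Subgroup G) :
    Rd F H ∈ F ∧ Rd F H ≤ H ∧ CFix (Rd F H) H := by
  classical
  set A : Set (Subgroup G) := {S : Subgroup G | S ∈ F ∧ S ≤ H ∧ CFix S H} with hA
  have hbot : (⊥ : Subgroup G) ∈ A := ⟨bot_mem_F hF, bot_le, fun a _ => cjj_bot a⟩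
  have hjoin : ∀ S ∈ A, ∀ T ∈ A, S ⊔ T ∈ A := by
    rintro S ⟨hSF, hSH, hScf⟩ T ⟨hTF, hTH, hTcf⟩
    have hsH : S ⊔ T ≤ H := sup_le hSH hTH
    refine ⟨join_mem_F hF hSF hTF ?_ ?_, hsH, ?_⟩
    · exact ADn_of_cFix le_sup_left (hScf.mono hsH)
    · exact ADn_of_cFix le_sup_right (hTcf.mono hsH)
    · intro a ha
      rw [cjj_sup, hScf a ha, hTcf a ha]
  obtain ⟨M, hM, hMmax⟩ : ∃ M ∈ A, ∀ S ∈ A, id M ≤ id S → id M = id S := by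
    obtain ⟨M, hM, hMmax⟩ := Set.Finite.exists_maximalFor id A (Set.toFinite A) ⟨⊥, hbot⟩
    exact ⟨M, hM, fun S hS h => le_antisymm h (hMmax hS h)⟩
  have hall : ∀ S ∈ A, S ≤ M := by
    intro S hS
    have h1 := hMmax (S ⊔ M) (hjoin S hS M hM) le_sup_right
    simp only [id] at h1
    rw [h1]
    exact le_sup_left
  have hRd : Rd F H = M := by
    apply le_antisymm (iSup₂_le hall)
    exact le_iSup_of_le M (le_iSup_of_le hM le_rfl)
  rw [hRd]
  exact ⟨hM.1, hM.2.1, hM.2.2⟩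

end FM

section Crux
variable {π : Set ℕ} {G : Type*} [Group G] [Finite G] {F : Set (Subgroup G)}

lemma le_Rd_of_ADn (hF : IsNPiFittingSet π F) {H S : Subgroup G} (hS : S ∈ F)
    (h : ADn π S H) : S ≤ Rd F H := by
  obtain ⟨hSH, hd⟩ := h
  obtain ⟨hRF, hRH, hRcf⟩ := Rd_spec hF H
  rcases hd with ⟨hsub, hcf⟩ | ⟨hns, hcf1, hcf2⟩
  · exact le_Rd hS hSH hcf
  · set R := Rd F H with hR
    set D := piResidualIn π H with hD
    have hDH : D ≤ H := prIn_le π H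
    have hDcf : CFix D H := pr_cfix π H
    obtain ⟨hRDF, hRDD, hRDcf⟩ := Rd_spec hF D
    have hRDcfH : CFix (Rd F D) H := by
      intro a ha
      rw [Rd_cjj hF, hDcf a ha]
    have hRDle : Rd F D ≤ R := le_Rd hRDF (hRDD.trans hDH) hRDcfH
    set GS : Set (Subgroup G) := {W | W ∈ F ∧ R ≤ W ∧ W ≤ H ∧ CFix W D} with hGS
    have halpha : ∀ W ∈ GS, ADn π W H := by
      rintro W ⟨hWF, hRW, hWH, hWD⟩
      have hXF : W ⊓ D ∈ F := by
        apply mem_F_of_cFix hF hWF inf_le_left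
        intro w hw
        rw [cjj_inf, cjj_self hw, hDcf w (hWH hw)]
      have hXRD : W ⊓ D ≤ Rd F D := by
        apply le_Rd hXF inf_le_right
        intro d hd
        rw [cjj_inf, hWD d hd, hDcf d (hDH hd)]
      have hXR : W ⊓ D ≤ R := hXRD.trans hRDle
      have hq : PiNum π (R.relIndex W) := by
        have h1 : R.relIndex W ∣ (W ⊓ D).relIndex W := by
          rw [← Subgroup.relIndex_mul_relIndex (W ⊓ D) R W hXR hRW]
          exact dvd_mul_left _ _
        have h2 : (W ⊓ D).relIndex W = D.relIndex W := by
          rw [inf_comm]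
          exact Subgroup.inf_relIndex_right D W
        have h3 : (W ⊓ D).relIndex W ∣ D.relIndex H := by
          rw [h2]
          exact relindex_dvd_of_cFix hDH hDcf hWH
        exact PiNum.of_dvd (h1.trans h3) (piNum_relindex_prIn π H)
      have hE : piResidualIn π W = piResidualIn π R :=
        pr_sandwich π hRW (fun w hw => hRcf w (hWH hw)) hq
      refine ⟨hWH, Or.inr ⟨hns, ?_, hWD⟩⟩
      rw [hE]
      intro a ha
      rw [← pr_cjj, hRcf a ha]
    have hbeta : ∀ W₁ ∈ GS, ∀ W₂ ∈ GS, W₁ ⊔ W₂ ∈ GS := by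
      rintro W₁ hW1 W₂ hW2
      obtain ⟨hW1F, hRW1, hW1H, hW1D⟩ := hW1
      obtain ⟨hW2F, hRW2, hW2H, hW2D⟩ := hW2
      have hsH : W₁ ⊔ W₂ ≤ H := sup_le hW1H hW2H
      refine ⟨join_mem_F hF hW1F hW2F ((halpha W₁ ⟨hW1F, hRW1, hW1H, hW1D⟩).mono le_sup_left hsH)
        ((halpha W₂ ⟨hW2F, hRW2, hW2H, hW2D⟩).mono le_sup_right hsH),
        le_sup_left.trans' hRW1, hsH, ?_⟩
      · intro d hd
        rw [cjj_sup, hW1D d hd, hW2D d hd]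
    have hgamma : ∀ W ∈ GS, ∀ h ∈ H, cjj h W ∈ GS := by
      rintro W ⟨hWF, hRW, hWH, hWD⟩ h hh
      refine ⟨cjj_mem_F hF hWF h, ?_, ?_, ?_⟩
      · have h1 : R = cjj h R := (hRcf h hh).symm
        rw [h1]
        exact cjj_mono hRW
      · have h1 := cjj_mono (a := h) hWH
        rwa [cjj_self hh] at h1
      · intro d hd
        have hd2 : h⁻¹ * d * h ∈ D := by
          rw [← hDcf h⁻¹ (H.inv_mem hh), mem_cjj]
          have e : h⁻¹⁻¹ * (h⁻¹ * d * h) * h⁻¹ = d := by group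
          rwa [e]
        have e2 : d * h = h * (h⁻¹ * d * h) := by group
        rw [cjj_cjj, e2, ← cjj_cjj, hWD _ hd2]
    have hRGS : R ∈ GS := ⟨hRF, le_rfl, hRH, fun d hd => hRcf d (hDH hd)⟩
    obtain ⟨M, hMGS, hMmax⟩ : ∃ M ∈ GS, ∀ W ∈ GS, id M ≤ id W → id M = id W := by
      obtain ⟨M, hMGS, hMmax⟩ := Set.Finite.exists_maximalFor id GS (Set.toFinite GS) ⟨R, hRGS⟩
      exact ⟨M, hMGS, fun W hW h => le_antisymm h (hMmax hW h)⟩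
    have hallM : ∀ W ∈ GS, W ≤ M := by
      intro W hW
      have h1 := hMmax (W ⊔ M) (hbeta W hW M hMGS) le_sup_right
      simp only [id] at h1
      rw [h1]
      exact le_sup_left
    have hMcf : CFix M H := by
      intro h hh
      apply le_antisymm (hallM _ (hgamma M hMGS h hh))
      have h2 := hallM _ (hgamma M hMGS h⁻¹ (H.inv_mem hh))
      have h3 := cjj_mono (a := h) h2
      rwa [cjj_cjj, mul_inv_cancel, cjj_one] at h3
    have hMR : M ≤ R := le_Rd hMGS.1 hMGS.2.2.1 hMcf
    have hVGS : S ⊔ R ∈ GS := by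
      have hsH : S ⊔ R ≤ H := sup_le hSH hRH
      refine ⟨join_mem_F hF hS hRF
        (ADn.mono ⟨hSH, Or.inr ⟨hns, hcf1, hcf2⟩⟩ le_sup_left hsH)
        (ADn_of_cFix le_sup_right (fun x hx => hRcf x (hsH hx))), le_sup_right, hsH, ?_⟩
      intro d hd
      rw [cjj_sup, hcf2 d hd, hRcf d (hDH hd)]
    exact le_sup_left.trans ((hallM _ hVGS).trans hMR)

lemma Rd_le_Rd_of_ADn (hF : IsNPiFittingSet π F) {M H : Subgroup G} (hM : ADn π M H) :
    Rd F M ≤ Rd F H := by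
  obtain ⟨hMH, hd⟩ := hM
  obtain ⟨hRMF, hRMM, hRMcf⟩ := Rd_spec hF M
  rcases hd with ⟨hsub, hcf⟩ | ⟨hns, hcf1, hcf2⟩
  · apply le_Rd hRMF (hRMM.trans hMH)
    intro a ha
    rw [Rd_cjj hF, hcf a ha]
  · set RM := Rd F M with hRM
    set DM := piResidualIn π M with hDM
    have hDMM : DM ≤ M := prIn_le π M
    have hDMcfM : CFix DM M := pr_cfix π M
    have hXF : RM ⊓ DM ∈ F := by
      apply mem_F_of_cFix hF hRMF inf_le_left
      intro r hr
      rw [cjj_inf, cjj_self hr, hDMcfM r (hRMM hr)]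
    have hXRD : RM ⊓ DM ≤ Rd F DM := by
      apply le_Rd hXF inf_le_right
      intro d hd
      rw [cjj_inf, hRMcf d (hDMM hd), hDMcfM d (hDMM hd)]
    have hRDcfH : CFix (Rd F DM) H := by
      intro a ha
      rw [Rd_cjj hF, hcf1 a ha]
    have hRDRM : Rd F DM ≤ RM :=
      le_Rd (Rd_spec hF DM).1 ((Rd_spec hF DM).2.1.trans hDMM)
        (fun m hm => hRDcfH m (hMH hm))
    have hXeq : RM ⊓ DM = Rd F DM := le_antisymm hXRD (le_inf hRDRM (Rd_spec hF DM).2.1)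
    have hq : PiNum π ((RM ⊓ DM).relIndex RM) := by
      have h2 : (RM ⊓ DM).relIndex RM = DM.relIndex RM := by
        rw [inf_comm]
        exact Subgroup.inf_relIndex_right DM RM
      rw [h2]
      exact PiNum.of_dvd (relindex_dvd_of_cFix hDMM hDMcfM hRMM) (piNum_relindex_prIn π M)
    have hXcf : CFix (RM ⊓ DM) RM := by
      intro r hr
      rw [cjj_inf, cjj_self hr, hDMcfM r (hRMM hr)]
    have hE : piResidualIn π RM = piResidualIn π (RM ⊓ DM) :=
      pr_sandwich π inf_le_left hXcf hq
    have hADn : ADn π RM H := by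
      refine ⟨hRMM.trans hMH, Or.inr ⟨hns, ?_, ?_⟩⟩
      · rw [hE, hXeq]
        intro a ha
        rw [← pr_cjj, hRDcfH a ha]
      · intro x hx
        rw [Rd_cjj hF, hcf2 x hx]
    exact le_Rd_of_ADn hF hRMF hADn

lemma key_chain (hF : IsNPiFittingSet π F) :
    ∀ (n : ℕ) (H S : Subgroup G) (c : Fin (n + 1) → Subgroup G), c 0 = S →
      c (Fin.last n) = H → (∀ i : Fin n, ADn π (c i.castSucc) (c i.succ)) → S ∈ F →
      S ≤ Rd F H := by
  intro n
  induction n with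
  | zero =>
    intro H S c h0 hl _ hS
    have : S = H := by rw [← h0, ← hl]; rfl
    rw [← this]
    exact le_Rd hS le_rfl (fun s hs => cjj_self hs)
  | succ n ih =>
    intro H S c h0 hl hstep hS
    set M := c (Fin.castSucc (Fin.last n)) with hM
    have hSM : S ≤ Rd F M := by
      apply ih M S (fun i => c i.castSucc) _ rfl _ hS
      · rw [← h0]
        rfl
      · intro i
        have h1 := hstep i.castSucc
        rwa [Fin.succ_castSucc] at h1
    have hlast : ADn π M H := by
      have h1 := hstep (Fin.last n)
      rwa [Fin.succ_last, hl] at h1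
    exact hSM.trans (Rd_le_Rd_of_ADn hF hlast)

end Crux

section Final
variable {π : Set ℕ} {G : Type*} [Group G] [Finite G] {F : Set (Subgroup G)}

lemma R0_eq_RdTop (hF : IsNPiFittingSet π F) :
    (⨆ S ∈ {S : Subgroup G | S ∈ F ∧ S.Normal}, S) = Rd F ⊤ := by
  apply le_antisymm
  · refine iSup₂_le ?_
    rintro S ⟨hS, hn⟩
    exact le_Rd hS le_top (cFix_of_normal hn ⊤)
  · refine iSup₂_le ?_
    rintro S ⟨hS, _, hcf⟩
    exact le_iSup_of_le S (le_iSup_of_le ⟨hS, normal_of_cFix_top hcf⟩ le_rfl)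

theorem radical_char_aux (hπ : ∀ p ∈ π, p.Prime) (hF : IsNPiFittingSet π F) :
    (⨆ S ∈ {S : Subgroup G | S ∈ F ∧ S.Normal}, S) =
        (⨆ S ∈ {S : Subgroup G | S ∈ F ∧ IsSubnormal' S}, S) ∧
    (⨆ S ∈ {S : Subgroup G | S ∈ F ∧ S.Normal}, S) =
        (⨆ S ∈ {S : Subgroup G | S ∈ F ∧ IsDnormal π S}, S) ∧
    (⨆ S ∈ {S : Subgroup G | S ∈ F ∧ S.Normal}, S) =
        (⨆ S ∈ {S : Subgroup G | S ∈ F ∧ IsDsubnormal π S}, S) := by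
  refine ⟨?_, ?_, ?_⟩
  · apply le_antisymm
    · refine iSup₂_le ?_
      rintro S ⟨hS, hn⟩
      have hsn : IsSubnormal' S := by
        refine ⟨1, ![S, ⊤], rfl, rfl, ?_⟩
        intro i
        fin_cases i
        refine ⟨?_, ?_⟩
        · show S ≤ ⊤
          exact le_top
        · show (S.subgroupOf ⊤).Normal
          exact hn.subgroupOf ⊤
      exact le_iSup_of_le S (le_iSup_of_le ⟨hS, hsn⟩ le_rfl)
    · refine iSup₂_le ?_
      rintro S ⟨hS, n, c, h0, hl, hstep⟩
      rw [R0_eq_RdTop hF]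
      exact key_chain hF n ⊤ S c h0 hl
        (fun i => ADn_of_cFix (hstep i).1
          (cFix_of_normal_subgroupOf (hstep i).1 (hstep i).2)) hS
  · apply le_antisymm
    · refine iSup₂_le ?_
      rintro S ⟨hS, hn⟩
      exact le_iSup_of_le S (le_iSup_of_le ⟨hS, isDnormal_of_normal hn⟩ le_rfl)
    · refine iSup₂_le ?_
      rintro S ⟨hS, hdn⟩
      rw [R0_eq_RdTop hF]
      exact le_Rd_of_ADn hF hS (ADn_top_of_isDnormal hdn)
  · apply le_antisymm
    · refine iSup₂_le ?_
      rintro S ⟨hS, hn⟩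
      exact le_iSup_of_le S (le_iSup_of_le ⟨hS, isDsubnormal_of_normal hn⟩ le_rfl)
    · refine iSup₂_le ?_
      rintro S ⟨hS, n, c, h0, hl, hstep⟩
      rw [R0_eq_RdTop hF]
      exact key_chain hF n ⊤ S c h0 hl
        (fun i => ADn_of_isDnormal (hstep i).1 (hstep i).2) hS

end Final



/-- Proposition 2.5: for an `N^π`-Fitting set `F` of `G`, the `F`-radical `G_F` (the join
of all normal members of `F`) coincides with the join of all subnormal members of `F`,
with the join of all `N^π`-Dnormal members of `F`, and with the join of all
`N^π`-Dsubnormal members of `F`. -/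
theorem radical_characterizations (π : Set ℕ) (hπ : ∀ p ∈ π, p.Prime)
    (G : Type*) [Group G] [Finite G] (F : Set (Subgroup G))
    (hF : IsNPiFittingSet π F) :
    (⨆ S ∈ {S : Subgroup G | S ∈ F ∧ S.Normal}, S) =
        (⨆ S ∈ {S : Subgroup G | S ∈ F ∧ IsSubnormal' S}, S) ∧
    (⨆ S ∈ {S : Subgroup G | S ∈ F ∧ S.Normal}, S) =
        (⨆ S ∈ {S : Subgroup G | S ∈ F ∧ IsDnormal π S}, S) ∧
    (⨆ S ∈ {S : Subgroup G | S ∈ F ∧ S.Normal}, S) =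
        (⨆ S ∈ {S : Subgroup G | S ∈ F ∧ IsDsubnormal π S}, S) := by
  exact radical_char_aux hπ hF
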